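/- In the parallel composition with global actions SR and B, two dependent actions are never both enabled in any global state; equivalently, the dependency relation restricted to co-enabled actions is empty, so for any state s, any action enabled in s is independent of every other action enabled in s. -/

import Mathlib

/-- Local actions of an MPI process: synchronous send to a destination,
receive from a specific source, or barrier. -/
inductive MAct (n : ℕ) where
  | send (dest : Fin n)
  | recv (src : Fin n)
  | barrier
deriving DecidableEq

/-- Global actions of the parallel composition: `B` (barrier synchronizing all
processes) and `SR i j` (matched synchronous send from process `i` to
process `j`). -/
inductive GAct (n : ℕ) where
  | B
  | SR (i j : Fin n)
deriving DecidableEq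

variable {n : ℕ} {L : Fin n → Type}

/-- A global action is enabled in the global state `σ` (an `n`-tuple of local
states): `B` iff every process's unique next local action is `barrier`;
`SR i j` iff `i ≠ j`, process `i`'s next action is a send to `j` and process
`j`'s next action is a receive from `i`. Here `next i` gives the unique next
local action of deterministic process `i` (`none` = terminated). -/
def GEnabled (next : ∀ i, L i → Option (MAct n)) (σ : ∀ i, L i) : GAct n → Prop
  | .B => ∀ i, next i (σ i) = some .barrier
  | .SR i j => i ≠ j ∧ next i (σ i) = some (.send j) ∧ next j (σ j) = some (.recv i)

open scoped Classical in
/-- The global step function: `B` advances all components (via the local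
advance functions `adv`), `SR i j` advances exactly components `i` and `j`. -/
noncomputable def gstep (next : ∀ i, L i → Option (MAct n)) (adv : ∀ i, L i → L i) :
    GAct n → (∀ i, L i) → Option (∀ i, L i)
  | .B, σ => if GEnabled next σ .B then some (fun k => adv k (σ k)) else none
  | .SR i j, σ =>
      if GEnabled next σ (.SR i j) then
        some (Function.update (Function.update σ i (adv i (σ i))) j (adv j (σ j)))
      else none

/-- in the parallel composition with global actions `SR` and `B`,
any two distinct actions enabled in the same global state are independent
(each remains enabled after the other and they commute); equivalently, two
dependent actions are never both enabled in any global state. -/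
theorem stmt10 (next : ∀ i, L i → Option (MAct n)) (adv : ∀ i, L i → L i)
    (σ : ∀ i, L i) (g g' : GAct n)
    (hne : g ≠ g')
    (h1 : GEnabled next σ g)
    (h2 : GEnabled next σ g') :
    ∃ σ₁ σ₂,
      gstep next adv g σ = some σ₁ ∧
      gstep next adv g' σ = some σ₂ ∧
      GEnabled next σ₁ g' ∧
      GEnabled next σ₂ g ∧
      gstep next adv g' σ₁ = gstep next adv g σ₂ := by
  classical
  match g, g' with
  | .B, .B => exact absurd rfl hne
  | .B, .SR i j =>
      exact absurd (h2.2.1.symm.trans (h1 i)) (by simp)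
  | .SR i j, .B =>
      exact absurd (h1.2.1.symm.trans (h2 i)) (by simp)
  | .SR i j, .SR i' j' =>
      obtain ⟨hij, hsi, hrj⟩ := h1
      obtain ⟨hij', hsi', hrj'⟩ := h2
      have hii' : i ≠ i' := by
        rintro rfl
        have : j = j' := by
          have := hsi.symm.trans hsi'; simpa using this
        exact hne (by rw [this])
      have hij'2 : i ≠ j' := by
        rintro rfl; have := hsi.symm.trans hrj'; simp at this
      have hji' : j ≠ i' := by
        rintro rfl; have := hrj.symm.trans hsi'; simp at this
      have hjj' : j ≠ j' := by
        rintro rfl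
        have : i = i' := by
          have := hrj.symm.trans hrj'; simpa using this
        exact hne (by rw [this])
      set σ₁ := Function.update (Function.update σ i (adv i (σ i))) j (adv j (σ j)) with hσ₁
      set σ₂ := Function.update (Function.update σ i' (adv i' (σ i'))) j' (adv j' (σ j')) with hσ₂
      have e1i' : σ₁ i' = σ i' := by
        simp [hσ₁, Function.update_of_ne hji'.symm, Function.update_of_ne hii'.symm]
      have e1j' : σ₁ j' = σ j' := by
        simp [hσ₁, Function.update_of_ne hjj'.symm, Function.update_of_ne hij'2.symm]
      have e2i : σ₂ i = σ i := by
        simp [hσ₂, Function.update_of_ne hij'2, Function.update_of_ne hii']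
      have e2j : σ₂ j = σ j := by
        simp [hσ₂, Function.update_of_ne hjj', Function.update_of_ne hji']
      have hen1 : GEnabled next σ₁ (.SR i' j') := ⟨hij', by rw [e1i']; exact hsi', by rw [e1j']; exact hrj'⟩
      have hen2 : GEnabled next σ₂ (.SR i j) := ⟨hij, by rw [e2i]; exact hsi, by rw [e2j]; exact hrj⟩
      refine ⟨σ₁, σ₂, by simp [gstep, GEnabled, hij, hsi, hrj, hσ₁],
        by simp [gstep, GEnabled, hij', hsi', hrj', hσ₂], hen1, hen2, ?_⟩
      rw [show gstep next adv (.SR i' j') σ₁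
          = some (Function.update (Function.update σ₁ i' (adv i' (σ₁ i'))) j' (adv j' (σ₁ j'))) by
            simp [gstep, hen1],
        show gstep next adv (.SR i j) σ₂
          = some (Function.update (Function.update σ₂ i (adv i (σ₂ i))) j (adv j (σ₂ j))) by
            simp [gstep, hen2]]
      congr 1
      funext k
      rw [e1i', e1j', e2i, e2j]
      simp only [hσ₁, hσ₂, Function.update]
      by_cases h1 : k = j' <;> by_cases h2 : k = i' <;> by_cases h3 : k = j <;>
        by_cases h4 : k = i <;> simp_all
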